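/- Let {ξ_i : i ≥ 1} be a sequence of i.i.d. standard normal random variables and set S_k = Σ_{i=1}^{k} ξ_i². Then for any positive integers m and n and any x > 0 satisfying m ≤ n/2 and x ≤ n/m, P( |S_n/S_m − n/m| ≥ x ) ≤ 6·exp( −m⁴x²/(48·n³) ). -/

import Mathlib

open MeasureTheory ProbabilityTheory Real
open scoped ENNReal NNReal

lemma jiIndepFun_ae_eq {Ω : Type*} [MeasurableSpace Ω] {μ : Measure Ω}
    {f g : ℕ → Ω → ℝ} (hf : iIndepFun f μ)
    (h : ∀ i, f i =ᵐ[μ] g i) : iIndepFun g μ := by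
  rw [iIndepFun_iff_measure_inter_preimage_eq_mul] at hf ⊢
  intro S sets hmeas
  have hS : ∀ᵐ ω ∂μ, ∀ i ∈ S, f i ω = g i ω :=
    (ae_ball_iff S.countable_toSet).mpr fun i _ => h i
  have h1 : ∀ i, (f i ⁻¹' sets i : Set Ω) =ᵐ[μ] (g i ⁻¹' sets i) := fun i =>
    (h i).mono fun ω hω => by
      show (f i ω ∈ sets i) = (g i ω ∈ sets i)
      rw [hω]
  have h2 : ((⋂ i ∈ S, f i ⁻¹' sets i : Set Ω)) =ᵐ[μ] (⋂ i ∈ S, g i ⁻¹' sets i : Set Ω) :=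
    hS.mono fun ω hω => by
      show (ω ∈ ⋂ i ∈ S, f i ⁻¹' sets i) = (ω ∈ ⋂ i ∈ S, g i ⁻¹' sets i)
      simp only [Set.mem_iInter, Set.mem_preimage, eq_iff_iff]
      exact ⟨fun hmem i hi => (hω i hi) ▸ hmem i hi, fun hmem i hi => (hω i hi) ▸ hmem i hi⟩
  rw [← measure_congr h2, hf S hmeas]
  exact Finset.prod_congr rfl fun i _ => measure_congr (h1 i)

lemma jgauss_density : gaussianReal 0 1 =
    volume.withDensity (fun x => ((Real.toNNReal (gaussianPDFReal 0 1 x) : ℝ≥0) : ℝ≥0∞)) := by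
  rw [gaussianReal_of_var_ne_zero 0 one_ne_zero]
  rfl

lemma jintegrable_exp_mul_sq {t : ℝ} (ht : t < 1 / 2) :
    Integrable (fun y => Real.exp (t * y ^ 2)) (gaussianReal 0 1) := by
  rw [jgauss_density, integrable_withDensity_iff_integrable_smul]
  · have hb : (0 : ℝ) < 1 / 2 - t := by linarith
    have : (fun y : ℝ => (Real.toNNReal (gaussianPDFReal 0 1 y) : ℝ≥0) • Real.exp (t * y ^ 2))
        = fun y : ℝ => (Real.sqrt (2 * π))⁻¹ * Real.exp (-(1 / 2 - t) * y ^ 2) := by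
      ext y
      rw [NNReal.smul_def, smul_eq_mul, Real.coe_toNNReal _ (gaussianPDFReal_nonneg 0 1 y)]
      simp only [gaussianPDFReal, NNReal.coe_one, mul_one, sub_zero]
      rw [mul_assoc, ← Real.exp_add]
      ring_nf
    rw [this]
    exact (integrable_exp_neg_mul_sq hb).const_mul _
  · exact (measurable_gaussianPDFReal 0 1).real_toNNReal

lemma jintegral_exp_mul_sq {t : ℝ} (ht : t < 1 / 2) :
    ∫ y, Real.exp (t * y ^ 2) ∂(gaussianReal 0 1) = (Real.sqrt (1 - 2 * t))⁻¹ := by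
  have hb : (0 : ℝ) < 1 / 2 - t := by linarith
  rw [jgauss_density,
    integral_withDensity_eq_integral_smul ((measurable_gaussianPDFReal 0 1).real_toNNReal)]
  have : (fun y : ℝ => (Real.toNNReal (gaussianPDFReal 0 1 y) : ℝ≥0) • Real.exp (t * y ^ 2))
      = fun y : ℝ => (Real.sqrt (2 * π))⁻¹ * Real.exp (-(1 / 2 - t) * y ^ 2) := by
    ext y
    rw [NNReal.smul_def, smul_eq_mul, Real.coe_toNNReal _ (gaussianPDFReal_nonneg 0 1 y)]
    simp only [gaussianPDFReal, NNReal.coe_one, mul_one, sub_zero]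
    rw [mul_assoc, ← Real.exp_add]
    ring_nf
  rw [this, integral_const_mul, integral_gaussian]
  rw [Real.sqrt_div pi_pos.le, show (1 : ℝ) - 2 * t = 2 * (1 / 2 - t) by ring,
    Real.sqrt_mul (by norm_num : (0:ℝ) ≤ 2), Real.sqrt_mul (by norm_num : (0:ℝ) ≤ 2)]
  have hπ : (0:ℝ) < Real.sqrt π := Real.sqrt_pos.mpr pi_pos
  have h2 : (0:ℝ) < Real.sqrt 2 := Real.sqrt_pos.mpr (by norm_num)
  have hbt : (0:ℝ) < Real.sqrt (1 / 2 - t) := Real.sqrt_pos.mpr hb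
  have hππ : Real.sqrt π * Real.sqrt π = π := Real.mul_self_sqrt pi_pos.le
  have h3 : (0:ℝ) < Real.sqrt (1 - 2 * t) := Real.sqrt_pos.mpr (by linarith)
  field_simp

lemma jlog_one_add_le {l : ℝ} (h0 : 0 ≤ l) (h1 : l ≤ 1) :
    Real.log (1 + l) ≤ l - l ^ 2 / 4 := by
  rw [Real.log_le_iff_le_exp (by linarith)]
  have hy : 0 ≤ l - l ^ 2 / 4 := by nlinarith
  have h2 := Real.quadratic_le_exp_of_nonneg hy
  nlinarith [sq_nonneg l, sq_nonneg (l - l ^ 2 / 4)]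

lemma jlog_one_sub_le {l : ℝ} (h0 : 0 ≤ l) (h1 : l < 1) :
    Real.log (1 - l) ≤ -l - l ^ 2 / 4 := by
  rw [Real.log_le_iff_le_exp (by linarith)]
  have key : -l - l ^ 2 / 4 = (-(l / 2 + l ^ 2 / 8)) + (-(l / 2 + l ^ 2 / 8)) := by ring
  rw [key, Real.exp_add]
  have h2 : 1 - (l / 2 + l ^ 2 / 8) ≤ Real.exp (-(l / 2 + l ^ 2 / 8)) := by
    have := Real.add_one_le_exp (-(l / 2 + l ^ 2 / 8)); linarith
  have h3 : 0 ≤ 1 - (l / 2 + l ^ 2 / 8) := by nlinarith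
  nlinarith [mul_le_mul h2 h2 h3 (Real.exp_nonneg _)]

lemma jsqrt_inv_pow {v : ℝ} (hv : 0 < v) (k : ℕ) :
    ((Real.sqrt v)⁻¹ : ℝ) ^ k = Real.exp ((k : ℝ) * (-(Real.log v / 2))) := by
  have h1 : (Real.sqrt v)⁻¹ = Real.exp (-(Real.log v / 2)) := by
    rw [Real.sqrt_eq_rpow, Real.rpow_def_of_pos hv, ← Real.exp_neg]
    ring_nf
  rw [h1, ← Real.exp_nat_mul]

lemma jchi_upper {Ω : Type*} [MeasurableSpace Ω] {μ : Measure Ω} [IsProbabilityMeasure μ]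
    {X : ℕ → Ω → ℝ} (hmeas : ∀ i, Measurable (X i))
    (hindep : iIndepFun X μ)
    (hmgf : ∀ t : ℝ, t < 1 / 2 → ∀ i, mgf (X i) μ t = (Real.sqrt (1 - 2 * t))⁻¹)
    (hint : ∀ t : ℝ, t < 1 / 2 → ∀ i, Integrable (fun ω => Real.exp (t * X i ω)) μ)
    (k : ℕ) (hk : 1 ≤ k) {u : ℝ} (h0 : 0 ≤ u) (huk : u ≤ k) :
    μ {ω | (k : ℝ) + u ≤ ∑ i ∈ Finset.range k, X i ω}
      ≤ ENNReal.ofReal (Real.exp (-u ^ 2 / (8 * k))) := by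
  have kp : (0 : ℝ) < k := by exact_mod_cast hk
  set t : ℝ := u / (2 * ((k : ℝ) + u)) with htdef
  have hku : (0 : ℝ) < (k : ℝ) + u := by linarith
  have ht0 : 0 ≤ t := by positivity
  have ht2 : t < 1 / 2 := by
    rw [div_lt_iff₀ (by linarith)]
    linarith
  have hv : (0 : ℝ) < 1 - 2 * t := by linarith
  clear_value t
  have hintt : Integrable (fun ω => Real.exp (t * (∑ i ∈ Finset.range k, X i) ω)) μ :=
    hindep.integrable_exp_mul_sum hmeas (fun i _ => hint t ht2 i)
  have cher := measure_ge_le_exp_mul_mgf (μ := μ) (X := ∑ i ∈ Finset.range k, X i)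
    ((k : ℝ) + u) ht0 hintt
  have hmgfsum : mgf (∑ i ∈ Finset.range k, X i) μ t = ((Real.sqrt (1 - 2 * t))⁻¹) ^ k := by
    rw [hindep.mgf_sum hmeas]
    rw [Finset.prod_congr rfl fun i _ => hmgf t ht2 i, Finset.prod_const, Finset.card_range]
  rw [hmgfsum, jsqrt_inv_pow hv, ← Real.exp_add] at cher
  -- bound the exponent
  have hl1 : u / k ≤ 1 := by rw [div_le_one kp]; exact huk
  have hl0 : 0 ≤ u / k := by positivity
  have hk0 : (k : ℝ) ≠ 0 := kp.ne'
  have hku0 : (k : ℝ) + u ≠ 0 := hku.ne'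
  have hvl : 1 - 2 * t = (1 + u / k)⁻¹ := by
    rw [htdef]
    rw [show (1 : ℝ) + u / k = ((k : ℝ) + u) / k by field_simp]
    rw [inv_div]
    field_simp
    ring
  have hlogv : Real.log (1 - 2 * t) = -Real.log (1 + u / k) := by
    rw [hvl, Real.log_inv]
  have hexp : -t * ((k : ℝ) + u) + (k : ℝ) * (-(Real.log (1 - 2 * t) / 2))
      ≤ -u ^ 2 / (8 * k) := by
    have hlog := jlog_one_add_le hl0 hl1
    have h1 : t * ((k : ℝ) + u) = u / 2 := by
      rw [htdef]; field_simp
    have h2 : (k : ℝ) * ((u / k) - (u / k) ^ 2 / 4) / 2 = u / 2 - u ^ 2 / (8 * k) := by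
      field_simp; ring
    have h3 := mul_le_mul_of_nonneg_left hlog kp.le
    rw [hlogv]
    have g1 : -t * ((k : ℝ) + u) = -(u / 2) := by linarith [h1]
    have g2 : (k : ℝ) * -(-Real.log (1 + u / (k : ℝ)) / 2)
        = (k : ℝ) * Real.log (1 + u / (k : ℝ)) / 2 := by ring
    rw [g1, g2, show -u ^ 2 / (8 * (k : ℝ)) = -(u ^ 2 / (8 * (k : ℝ))) by ring]
    linarith
  have hfin : Real.exp (-t * ((k : ℝ) + u) + (k : ℝ) * (-(Real.log (1 - 2 * t) / 2)))
      ≤ Real.exp (-u ^ 2 / (8 * k)) := Real.exp_le_exp.mpr hexp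
  have hset : {ω | (k : ℝ) + u ≤ ∑ i ∈ Finset.range k, X i ω}
      = {ω | (k : ℝ) + u ≤ (∑ i ∈ Finset.range k, X i) ω} := by
    ext ω; simp [Finset.sum_apply]
  rw [hset]
  rw [ENNReal.le_ofReal_iff_toReal_le (measure_ne_top μ _) (Real.exp_nonneg _)]
  exact le_trans cher hfin

lemma jchi_lower {Ω : Type*} [MeasurableSpace Ω] {μ : Measure Ω} [IsProbabilityMeasure μ]
    {X : ℕ → Ω → ℝ} (hmeas : ∀ i, Measurable (X i))
    (hindep : iIndepFun X μ)
    (hmgf : ∀ t : ℝ, t < 1 / 2 → ∀ i, mgf (X i) μ t = (Real.sqrt (1 - 2 * t))⁻¹)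
    (hint : ∀ t : ℝ, t < 1 / 2 → ∀ i, Integrable (fun ω => Real.exp (t * X i ω)) μ)
    (k : ℕ) (hk : 1 ≤ k) {u : ℝ} (h0 : 0 ≤ u) (huk : u < k) :
    μ {ω | ∑ i ∈ Finset.range k, X i ω ≤ (k : ℝ) - u}
      ≤ ENNReal.ofReal (Real.exp (-u ^ 2 / (8 * k))) := by
  have kp : (0 : ℝ) < k := by exact_mod_cast hk
  set t : ℝ := -(u / (2 * ((k : ℝ) - u))) with htdef
  have hku : (0 : ℝ) < (k : ℝ) - u := by linarith
  have hq : 0 ≤ u / (2 * ((k : ℝ) - u)) := by positivity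
  have ht0 : t ≤ 0 := by rw [htdef]; linarith
  have ht2 : t < 1 / 2 := by rw [htdef]; linarith
  have hv : (0 : ℝ) < 1 - 2 * t := by rw [htdef]; linarith
  clear_value t
  have hintt : Integrable (fun ω => Real.exp (t * (∑ i ∈ Finset.range k, X i) ω)) μ :=
    hindep.integrable_exp_mul_sum hmeas (fun i _ => hint t ht2 i)
  have cher := measure_le_le_exp_mul_mgf (μ := μ) (X := ∑ i ∈ Finset.range k, X i)
    ((k : ℝ) - u) ht0 hintt
  have hmgfsum : mgf (∑ i ∈ Finset.range k, X i) μ t = ((Real.sqrt (1 - 2 * t))⁻¹) ^ k := by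
    rw [hindep.mgf_sum hmeas]
    rw [Finset.prod_congr rfl fun i _ => hmgf t ht2 i, Finset.prod_const, Finset.card_range]
  rw [hmgfsum, jsqrt_inv_pow hv, ← Real.exp_add] at cher
  have hl1 : u / k < 1 := by rw [div_lt_one kp]; exact huk
  have hl0 : 0 ≤ u / k := by positivity
  have hk0 : (k : ℝ) ≠ 0 := kp.ne'
  have hku0 : (k : ℝ) - u ≠ 0 := hku.ne'
  have hvl : 1 - 2 * t = (1 - u / k)⁻¹ := by
    rw [htdef]
    rw [show (1 : ℝ) - u / k = ((k : ℝ) - u) / k by field_simp]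
    rw [inv_div]
    field_simp
    ring
  have hlogv : Real.log (1 - 2 * t) = -Real.log (1 - u / k) := by
    rw [hvl, Real.log_inv]
  have hexp : -t * ((k : ℝ) - u) + (k : ℝ) * (-(Real.log (1 - 2 * t) / 2))
      ≤ -u ^ 2 / (8 * k) := by
    have hlog := jlog_one_sub_le hl0 hl1
    have h1 : -t * ((k : ℝ) - u) = u / 2 := by
      rw [htdef]; field_simp
    have h2 : (k : ℝ) * ((-(u / k)) - (u / k) ^ 2 / 4) / 2 = -(u / 2) - u ^ 2 / (8 * k) := by
      field_simp; ring
    have h3 := mul_le_mul_of_nonneg_left hlog kp.le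
    rw [hlogv]
    rw [h1, show -u ^ 2 / (8 * (k : ℝ)) = -(u ^ 2 / (8 * (k : ℝ))) by ring]
    linarith
  have hfin : Real.exp (-t * ((k : ℝ) - u) + (k : ℝ) * (-(Real.log (1 - 2 * t) / 2)))
      ≤ Real.exp (-u ^ 2 / (8 * k)) := Real.exp_le_exp.mpr hexp
  have hset : {ω | ∑ i ∈ Finset.range k, X i ω ≤ (k : ℝ) - u}
      = {ω | (∑ i ∈ Finset.range k, X i) ω ≤ (k : ℝ) - u} := by
    ext ω; simp [Finset.sum_apply]
  rw [hset]
  rw [ENNReal.le_ofReal_iff_toReal_le (measure_ne_top μ _) (Real.exp_nonneg _)]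
  exact le_trans cher hfin

lemma jfive {e f : ℝ} (he : 0 ≤ e) (h : 5 * e ≤ 6 * f) :
    ENNReal.ofReal e + (ENNReal.ofReal e + ENNReal.ofReal e)
      + (ENNReal.ofReal e + ENNReal.ofReal e) ≤ ENNReal.ofReal (6 * f) := by
  rw [← ENNReal.ofReal_add he he, ← ENNReal.ofReal_add he (by linarith : (0:ℝ) ≤ e + e),
    ← ENNReal.ofReal_add (by linarith : (0:ℝ) ≤ e + (e + e)) (by linarith : (0:ℝ) ≤ e + e)]
  exact ENNReal.ofReal_le_ofReal (by linarith)

lemma jcmpA {m n x : ℝ} (hm : 1 ≤ m) (hn : 2 * m ≤ n) (hx0 : 0 ≤ x) (hxm : x * m ≤ n) :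
    -(m / 2) ^ 2 / (8 * m) ≤ -(m ^ 4 * x ^ 2) / (48 * n ^ 3) := by
  have hmp : (0:ℝ) < m := by linarith
  have hnp : (0:ℝ) < n := by linarith
  have hx2m : x ^ 2 * m ^ 2 ≤ n ^ 2 := by nlinarith [mul_nonneg hx0 hmp.le]
  rw [neg_div, neg_div, neg_le_neg_iff, div_le_div_iff₀ (by positivity) (by positivity)]
  nlinarith [mul_le_mul_of_nonneg_left hx2m (by positivity : (0:ℝ) ≤ 8 * m ^ 3),
    mul_nonneg (mul_nonneg (sq_nonneg m) (sq_nonneg n)) (by linarith : (0:ℝ) ≤ 3 * n - 2 * m)]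

lemma jcmpB {m n x : ℝ} (hm : 1 ≤ m) (hn : 2 * m ≤ n) (hx0 : 0 ≤ x) (hxm : x * m ≤ n) :
    -(5 * x * m / 24) ^ 2 / (8 * n) ≤ -(m ^ 4 * x ^ 2) / (48 * n ^ 3) := by
  have hmp : (0:ℝ) < m := by linarith
  have hnp : (0:ℝ) < n := by linarith
  rw [neg_div, neg_div, neg_le_neg_iff, div_le_div_iff₀ (by positivity) (by positivity), div_pow,
    div_mul_eq_mul_div, le_div_iff₀ (by positivity)]
  have h96 : 4608 * m ^ 2 ≤ 1200 * n ^ 2 := by nlinarith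
  nlinarith [mul_nonneg (mul_nonneg (mul_nonneg (sq_nonneg x) (sq_nonneg m)) hnp.le)
    (by linarith : (0:ℝ) ≤ 1200 * n ^ 2 - 4608 * m ^ 2)]

lemma jcmpC {m n x : ℝ} (hm : 1 ≤ m) (hn : 2 * m ≤ n) (hx0 : 0 ≤ x) (hxm : x * m ≤ n) :
    -(7 * x * m ^ 2 / (24 * n)) ^ 2 / (8 * m) ≤ -(m ^ 4 * x ^ 2) / (48 * n ^ 3) := by
  have hmp : (0:ℝ) < m := by linarith
  have hnp : (0:ℝ) < n := by linarith
  rw [neg_div, neg_div, neg_le_neg_iff, div_le_div_iff₀ (by positivity) (by positivity), div_pow,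
    div_mul_eq_mul_div, le_div_iff₀ (by positivity)]
  nlinarith [mul_nonneg (mul_nonneg (mul_nonneg (sq_nonneg x)
    (pow_nonneg hmp.le 4)) (sq_nonneg n))
    (by linarith : (0:ℝ) ≤ 2352 * n - 4608 * m)]

set_option maxHeartbeats 2000000 in
/-- **Lemma 4.2 (Jiang).**  Let `ξ₁, ξ₂, …` be i.i.d. standard normal random variables
and `S_k = Σ_{i=1}^{k} ξᵢ²`.  Then for any positive integers `m ≤ n/2` and any real
`0 < x ≤ n/m`, `P(|Sₙ/Sₘ − n/m| ≥ x) ≤ 6·exp(−m⁴x²/(48n³))`. -/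
theorem chi_square_ratio_tail_bound
    {Ω : Type*} [MeasurableSpace Ω] (μ : Measure Ω) [IsProbabilityMeasure μ]
    (ξ : ℕ → Ω → ℝ)
    (hindep : iIndepFun ξ μ)
    (hgauss : ∀ i, Measure.map (ξ i) μ = gaussianReal 0 1)
    (m n : ℕ) (hm : 1 ≤ m) (hmn : 2 * m ≤ n)
    (x : ℝ) (hx : 0 < x) (hxnm : x ≤ (n : ℝ) / (m : ℝ)) :
    μ {ω | x ≤ |(∑ i ∈ Finset.range n, ξ i ω ^ 2) / (∑ i ∈ Finset.range m, ξ i ω ^ 2)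
        - (n : ℝ) / (m : ℝ)|}
      ≤ ENNReal.ofReal (6 * Real.exp (-((m : ℝ) ^ 4 * x ^ 2) / (48 * (n : ℝ) ^ 3))) := by
  -- measurable modifications
  have hae : ∀ i, AEMeasurable (ξ i) μ := fun i =>
    aemeasurable_of_map_neZero (by rw [hgauss i]; infer_instance)
  obtain ⟨ξ', hmeas', heq⟩ : ∃ ξ' : ℕ → Ω → ℝ, (∀ i, Measurable (ξ' i))
      ∧ ∀ i, ξ i =ᵐ[μ] ξ' i :=
    ⟨fun i => (hae i).mk (ξ i), fun i => (hae i).measurable_mk, fun i => (hae i).ae_eq_mk⟩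
  have hindep' : iIndepFun ξ' μ := jiIndepFun_ae_eq hindep heq
  have hgauss' : ∀ i, Measure.map (ξ' i) μ = gaussianReal 0 1 := fun i => by
    rw [← Measure.map_congr (heq i)]; exact hgauss i
  -- numeric facts
  have hm' : (1 : ℝ) ≤ m := by exact_mod_cast hm
  have hmp : (0 : ℝ) < m := by linarith
  have hn2 : 2 * (m : ℝ) ≤ n := by exact_mod_cast hmn
  have hnp : (0 : ℝ) < n := by linarith
  have hn1 : 1 ≤ n := by omega
  have hxm : x * m ≤ n := by
    rw [← le_div_iff₀ hmp] at *; exact hxnm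
  have hx0 : 0 ≤ x := hx.le
  -- deviation levels
  set uB : ℝ := 5 * x * m / 24 with huBdef
  set uC : ℝ := 7 * x * m ^ 2 / (24 * n) with huCdef
  have huB0 : 0 ≤ uB := by rw [huBdef]; positivity
  have huC0 : 0 ≤ uC := by rw [huCdef]; positivity
  have huBn : uB ≤ (n : ℝ) := by
    rw [huBdef]; nlinarith [mul_nonneg hx0 hmp.le]
  have huBn' : uB < (n : ℝ) := by
    rw [huBdef]; nlinarith [mul_nonneg hx0 hmp.le]
  have huCm : uC < (m : ℝ) := by
    rw [huCdef, div_lt_iff₀ (by positivity)]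
    nlinarith [mul_le_mul_of_nonneg_right hxm hmp.le]
  -- exponent comparisons
  set T : ℝ := -((m : ℝ) ^ 4 * x ^ 2) / (48 * (n : ℝ) ^ 3) with hTdef
  have hcmpA : -((m : ℝ) / 2) ^ 2 / (8 * m) ≤ T := jcmpA hm' hn2 hx0 hxm
  have hcmpB : -uB ^ 2 / (8 * n) ≤ T := jcmpB hm' hn2 hx0 hxm
  have hcmpC : -uC ^ 2 / (8 * m) ≤ T := jcmpC hm' hn2 hx0 hxm
  -- squared variables
  have hXmeas : ∀ i, Measurable (fun ω => ξ' i ω ^ 2) := fun i => (hmeas' i).pow_const 2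
  have hXindep : iIndepFun (fun i ω => ξ' i ω ^ 2) μ :=
    hindep'.comp (fun _ => fun y : ℝ => y ^ 2) (fun _ => measurable_id.pow_const 2)
  have hXint : ∀ t : ℝ, t < 1 / 2 → ∀ i,
      Integrable (fun ω => Real.exp (t * (fun i ω => ξ' i ω ^ 2) i ω)) μ := by
    intro t ht i
    have hgm : Measurable fun y : ℝ => Real.exp (t * y ^ 2) :=
      ((measurable_id.pow_const 2).const_mul t).exp
    have h1 := jintegrable_exp_mul_sq ht
    rw [← hgauss' i] at h1
    exact (integrable_map_measure hgm.aestronglyMeasurable (hmeas' i).aemeasurable).mp h1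
  have hXmgf : ∀ t : ℝ, t < 1 / 2 → ∀ i,
      mgf ((fun i ω => ξ' i ω ^ 2) i) μ t = (Real.sqrt (1 - 2 * t))⁻¹ := by
    intro t ht i
    have hgm : AEStronglyMeasurable (fun y : ℝ => Real.exp (t * y ^ 2))
        (Measure.map (ξ' i) μ) :=
      (((measurable_id.pow_const 2).const_mul t).exp).aestronglyMeasurable
    calc mgf ((fun i ω => ξ' i ω ^ 2) i) μ t
        = ∫ y, Real.exp (t * y ^ 2) ∂(Measure.map (ξ' i) μ) :=
          (integral_map (hmeas' i).aemeasurable hgm).symm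
      _ = (Real.sqrt (1 - 2 * t))⁻¹ := by rw [hgauss' i]; exact jintegral_exp_mul_sq ht
  have hA2 : (m : ℝ) / 2 < m := by linarith
  -- tail bounds
  have htA := jchi_lower hXmeas hXindep hXmgf hXint m hm
    (by positivity : (0:ℝ) ≤ (m : ℝ) / 2) hA2
  have htBu := jchi_upper hXmeas hXindep hXmgf hXint n hn1 huB0 huBn
  have htBl := jchi_lower hXmeas hXindep hXmgf hXint n hn1 huB0 huBn'
  have htCu := jchi_upper hXmeas hXindep hXmgf hXint m hm huC0 huCm.le
  have htCl := jchi_lower hXmeas hXindep hXmgf hXint m hm huC0 huCm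
  -- upgraded tail bounds
  have he : 0 ≤ Real.exp T := (Real.exp_pos T).le
  have hA : μ {ω | ∑ i ∈ Finset.range m, ξ' i ω ^ 2 ≤ (m : ℝ) - (m : ℝ) / 2}
      ≤ ENNReal.ofReal (Real.exp T) :=
    le_trans htA (ENNReal.ofReal_le_ofReal (Real.exp_le_exp.mpr hcmpA))
  have hBu : μ {ω | (n : ℝ) + uB ≤ ∑ i ∈ Finset.range n, ξ' i ω ^ 2}
      ≤ ENNReal.ofReal (Real.exp T) :=
    le_trans htBu (ENNReal.ofReal_le_ofReal (Real.exp_le_exp.mpr hcmpB))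
  have hBl : μ {ω | ∑ i ∈ Finset.range n, ξ' i ω ^ 2 ≤ (n : ℝ) - uB}
      ≤ ENNReal.ofReal (Real.exp T) :=
    le_trans htBl (ENNReal.ofReal_le_ofReal (Real.exp_le_exp.mpr hcmpB))
  have hCu : μ {ω | (m : ℝ) + uC ≤ ∑ i ∈ Finset.range m, ξ' i ω ^ 2}
      ≤ ENNReal.ofReal (Real.exp T) :=
    le_trans htCu (ENNReal.ofReal_le_ofReal (Real.exp_le_exp.mpr hcmpC))
  have hCl : μ {ω | ∑ i ∈ Finset.range m, ξ' i ω ^ 2 ≤ (m : ℝ) - uC}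
      ≤ ENNReal.ofReal (Real.exp T) :=
    le_trans htCl (ENNReal.ofReal_le_ofReal (Real.exp_le_exp.mpr hcmpC))
  -- event inclusion
  have hsub : {ω | x ≤ |(∑ i ∈ Finset.range n, ξ' i ω ^ 2)
        / (∑ i ∈ Finset.range m, ξ' i ω ^ 2) - (n : ℝ) / (m : ℝ)|}
      ⊆ ({ω | ∑ i ∈ Finset.range m, ξ' i ω ^ 2 ≤ (m : ℝ) - (m : ℝ) / 2}
          ∪ ({ω | (n : ℝ) + uB ≤ ∑ i ∈ Finset.range n, ξ' i ω ^ 2}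
            ∪ {ω | ∑ i ∈ Finset.range n, ξ' i ω ^ 2 ≤ (n : ℝ) - uB}))
        ∪ ({ω | (m : ℝ) + uC ≤ ∑ i ∈ Finset.range m, ξ' i ω ^ 2}
            ∪ {ω | ∑ i ∈ Finset.range m, ξ' i ω ^ 2 ≤ (m : ℝ) - uC}) := by
    intro ω hω
    by_contra hcon
    simp only [Set.mem_union, Set.mem_setOf_eq, not_or, not_le] at hcon
    obtain ⟨⟨h1, h2, h3⟩, h4, h5⟩ := hcon
    simp only [Set.mem_setOf_eq] at hω
    set a : ℝ := ∑ i ∈ Finset.range n, ξ' i ω ^ 2 with hadef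
    set b : ℝ := ∑ i ∈ Finset.range m, ξ' i ω ^ 2 with hbdef
    have hb2 : (m : ℝ) / 2 < b := by linarith
    have hbpos : 0 < b := by linarith
    have habs : |a - n| < uB := abs_lt.mpr ⟨by linarith, by linarith⟩
    have hbabs : |b - m| < uC := abs_lt.mpr ⟨by linarith, by linarith⟩
    have hbm : 0 < b * m := mul_pos hbpos hmp
    have key : a / b - (n : ℝ) / m = ((m : ℝ) * (a - n) - (n : ℝ) * (b - m)) / (b * m) := by
      field_simp; ring
    have hnum : |(m : ℝ) * (a - n) - (n : ℝ) * (b - m)| < x * (b * m) := by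
      have t1 : |(m : ℝ) * (a - n) - (n : ℝ) * (b - m)|
          ≤ (m : ℝ) * |a - n| + (n : ℝ) * |b - m| := by
        calc |(m : ℝ) * (a - n) - (n : ℝ) * (b - m)|
            ≤ |(m : ℝ) * (a - n)| + |(n : ℝ) * (b - m)| := abs_sub _ _
          _ = (m : ℝ) * |a - n| + (n : ℝ) * |b - m| := by
              rw [abs_mul, abs_mul, abs_of_pos hmp, abs_of_pos hnp]
      have t2 : (m : ℝ) * uB + (n : ℝ) * uC = x * m ^ 2 / 2 := by
        rw [huBdef, huCdef]; field_simp; ring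
      have t3 : (m : ℝ) * |a - n| < m * uB := by
        exact mul_lt_mul_of_pos_left habs hmp
      have t4 : (n : ℝ) * |b - m| < n * uC := by
        exact mul_lt_mul_of_pos_left hbabs hnp
      have t5 : x * m ^ 2 / 2 < x * (b * m) := by nlinarith
      linarith
    have hlt : |a / b - (n : ℝ) / m| < x := by
      rw [key, abs_div, abs_of_pos hbm, div_lt_iff₀ hbm]
      exact hnum
    linarith [hω]
  -- replace ξ by ξ' in the event
  have hEeq : μ {ω | x ≤ |(∑ i ∈ Finset.range n, ξ i ω ^ 2)
        / (∑ i ∈ Finset.range m, ξ i ω ^ 2) - (n : ℝ) / (m : ℝ)|}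
      = μ {ω | x ≤ |(∑ i ∈ Finset.range n, ξ' i ω ^ 2)
        / (∑ i ∈ Finset.range m, ξ' i ω ^ 2) - (n : ℝ) / (m : ℝ)|} := by
    apply measure_congr
    have hS : ∀ᵐ ω ∂μ, ∀ i ∈ Finset.range n, ξ i ω = ξ' i ω :=
      (ae_ball_iff (Finset.range n).countable_toSet).mpr fun i _ => heq i
    refine hS.mono fun ω hω => ?_
    show (x ≤ |(∑ i ∈ Finset.range n, ξ i ω ^ 2)
        / (∑ i ∈ Finset.range m, ξ i ω ^ 2) - (n : ℝ) / (m : ℝ)|)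
      = (x ≤ |(∑ i ∈ Finset.range n, ξ' i ω ^ 2)
        / (∑ i ∈ Finset.range m, ξ' i ω ^ 2) - (n : ℝ) / (m : ℝ)|)
    have hsum : ∀ k, k ≤ n → ∑ i ∈ Finset.range k, ξ i ω ^ 2
        = ∑ i ∈ Finset.range k, ξ' i ω ^ 2 := fun k hk =>
      Finset.sum_congr rfl fun i hi => by
        rw [hω i (Finset.mem_range.mpr (lt_of_lt_of_le (Finset.mem_range.mp hi) hk))]
    rw [hsum n le_rfl, hsum m (by omega)]
  rw [hEeq]
  -- union bound
  calc μ {ω | x ≤ |(∑ i ∈ Finset.range n, ξ' i ω ^ 2)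
        / (∑ i ∈ Finset.range m, ξ' i ω ^ 2) - (n : ℝ) / (m : ℝ)|}
      ≤ μ (({ω | ∑ i ∈ Finset.range m, ξ' i ω ^ 2 ≤ (m : ℝ) - (m : ℝ) / 2}
          ∪ ({ω | (n : ℝ) + uB ≤ ∑ i ∈ Finset.range n, ξ' i ω ^ 2}
            ∪ {ω | ∑ i ∈ Finset.range n, ξ' i ω ^ 2 ≤ (n : ℝ) - uB}))
        ∪ ({ω | (m : ℝ) + uC ≤ ∑ i ∈ Finset.range m, ξ' i ω ^ 2}
            ∪ {ω | ∑ i ∈ Finset.range m, ξ' i ω ^ 2 ≤ (m : ℝ) - uC})) := measure_mono hsub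
    _ ≤ μ ({ω | ∑ i ∈ Finset.range m, ξ' i ω ^ 2 ≤ (m : ℝ) - (m : ℝ) / 2}
          ∪ ({ω | (n : ℝ) + uB ≤ ∑ i ∈ Finset.range n, ξ' i ω ^ 2}
            ∪ {ω | ∑ i ∈ Finset.range n, ξ' i ω ^ 2 ≤ (n : ℝ) - uB}))
        + μ ({ω | (m : ℝ) + uC ≤ ∑ i ∈ Finset.range m, ξ' i ω ^ 2}
            ∪ {ω | ∑ i ∈ Finset.range m, ξ' i ω ^ 2 ≤ (m : ℝ) - uC}) := measure_union_le _ _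
    _ ≤ (μ {ω | ∑ i ∈ Finset.range m, ξ' i ω ^ 2 ≤ (m : ℝ) - (m : ℝ) / 2}
          + (μ {ω | (n : ℝ) + uB ≤ ∑ i ∈ Finset.range n, ξ' i ω ^ 2}
            + μ {ω | ∑ i ∈ Finset.range n, ξ' i ω ^ 2 ≤ (n : ℝ) - uB}))
        + (μ {ω | (m : ℝ) + uC ≤ ∑ i ∈ Finset.range m, ξ' i ω ^ 2}
            + μ {ω | ∑ i ∈ Finset.range m, ξ' i ω ^ 2 ≤ (m : ℝ) - uC}) := by
          gcongr
          · exact le_trans (measure_union_le _ _)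
              (add_le_add_right (measure_union_le _ _) _)
          · exact measure_union_le _ _
    _ ≤ (ENNReal.ofReal (Real.exp T) + (ENNReal.ofReal (Real.exp T)
          + ENNReal.ofReal (Real.exp T)))
        + (ENNReal.ofReal (Real.exp T) + ENNReal.ofReal (Real.exp T)) := by
          exact add_le_add (add_le_add hA (add_le_add hBu hBl)) (add_le_add hCu hCl)
    _ ≤ ENNReal.ofReal (6 * Real.exp (-((m : ℝ) ^ 4 * x ^ 2) / (48 * (n : ℝ) ^ 3))) := by
          refine jfive he ?_
          rw [hTdef]
          linarith [he]
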